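/- Let V be a finite-dimensional real inner product space, 𝔤 ⊆ 𝔰𝔬(V) ≅ Λ²V, and R : Λ²V → Λ²V self-adjoint, non-negative, satisfying the Bianchi identity, with image 𝔤, commuting with ad_ω for all ω ∈ 𝔤. Let ω₁,...,ω_k be an orthonormal basis of 𝔤 and λ the Casimir eigenvalue on V (so Σ_α (R^{1/2}ω_α)² = λ·id_V). Then for every η ∈ Λ²V with R(η) = 0 (i.e. η in the orthogonal complement of 𝔤 in Λ²V), one has Σ_α (ad_{R^{1/2}ω_α})² η = 2λ·η. -/

import Mathlib

open scoped RealInnerProductSpace BigOperators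

/-- The endomorphism of `V` corresponding to the 2-vector `X ∧ Y`, i.e. `X ⊗ Y♭ - Y ⊗ X♭`. -/
noncomputable def wedgeEnd {V : Type*} [NormedAddCommGroup V] [InnerProductSpace ℝ V]
    (X Y : V) : V →ₗ[ℝ] V :=
  ((innerSL ℝ Y).toLinearMap).smulRight X - ((innerSL ℝ X).toLinearMap).smulRight Y

/-- The inner product on `Λ²V`, realized on (anti-symmetric) endomorphisms as `½ Tr(Aᵀ B)`. -/
noncomputable def twoFormInner {V : Type*} [NormedAddCommGroup V] [InnerProductSpace ℝ V]
    [FiniteDimensional ℝ V] (A B : V →ₗ[ℝ] V) : ℝ :=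
  (1 / 2 : ℝ) * LinearMap.trace ℝ V (LinearMap.adjoint A ∘ₗ B)

namespace CasAux

variable {V : Type*} [NormedAddCommGroup V] [InnerProductSpace ℝ V] [FiniteDimensional ℝ V]

lemma trace_eq_sum_inner {ι : Type*} [Fintype ι] [DecidableEq ι]
    (b : OrthonormalBasis ι ℝ V) (f : V →ₗ[ℝ] V) :
    LinearMap.trace ℝ V f = ∑ i, ⟪b i, f (b i)⟫ := by
  rw [LinearMap.trace_eq_matrix_trace ℝ b.toBasis, Matrix.trace]
  simp [Matrix.diag, LinearMap.toMatrix_apply, OrthonormalBasis.coe_toBasis,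
    OrthonormalBasis.coe_toBasis_repr_apply, OrthonormalBasis.repr_apply_apply, real_inner_comm]

lemma parseval {ι : Type*} [Fintype ι] (b : OrthonormalBasis ι ℝ V) (u v : V) :
    ∑ i, ⟪u, b i⟫ * ⟪v, b i⟫ = ⟪u, v⟫ := by
  have h := b.sum_inner_mul_inner u v
  simpa [real_inner_comm] using h

lemma skew_inner {C : V →ₗ[ℝ] V} (hC : LinearMap.adjoint C = -C) (u v : V) :
    ⟪C u, v⟫ = -⟪u, C v⟫ := by
  rw [← LinearMap.adjoint_inner_right, hC]
  simp

lemma tfi_eq {ι : Type*} [Fintype ι] [DecidableEq ι] (b : OrthonormalBasis ι ℝ V)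
    (A B : V →ₗ[ℝ] V) :
    twoFormInner A B = (1 / 2 : ℝ) * ∑ i, ⟪A (b i), B (b i)⟫ := by
  rw [twoFormInner, trace_eq_sum_inner b]
  congr 1
  refine Finset.sum_congr rfl fun i _ => ?_
  rw [LinearMap.comp_apply, LinearMap.adjoint_inner_right]

lemma tfi_eq' (A B : V →ₗ[ℝ] V) :
    twoFormInner A B = (1 / 2 : ℝ) *
      ∑ i, ⟪A (stdOrthonormalBasis ℝ V i), B (stdOrthonormalBasis ℝ V i)⟫ :=
  tfi_eq _ A B

lemma tfi_comm (A B : V →ₗ[ℝ] V) : twoFormInner A B = twoFormInner B A := by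
  simp [tfi_eq', real_inner_comm]

lemma tfi_zero_right (A : V →ₗ[ℝ] V) : twoFormInner A 0 = 0 := by
  simp [tfi_eq']

lemma tfi_sub_left (A B C : V →ₗ[ℝ] V) :
    twoFormInner (A - B) C = twoFormInner A C - twoFormInner B C := by
  simp [tfi_eq', inner_sub_left, Finset.sum_sub_distrib, mul_sub]

lemma tfi_smul_left (r : ℝ) (A C : V →ₗ[ℝ] V) :
    twoFormInner (r • A) C = r * twoFormInner A C := by
  simp only [tfi_eq', inner_smul_left, Finset.mul_sum, RCLike.star_def, starRingEnd_apply,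
    star_trivial]
  exact Finset.sum_congr rfl fun i _ => by
    simp [LinearMap.smul_apply, real_inner_smul_left]; ring

lemma tfi_sum_left {ι : Type*} (s : Finset ι) (f : ι → (V →ₗ[ℝ] V)) (C : V →ₗ[ℝ] V) :
    twoFormInner (∑ i ∈ s, f i) C = ∑ i ∈ s, twoFormInner (f i) C := by
  simp only [tfi_eq', LinearMap.coe_sum, Finset.sum_apply, sum_inner, Finset.mul_sum]
  rw [Finset.sum_comm]

lemma tfi_self_eq_zero {A : V →ₗ[ℝ] V} (h : twoFormInner A A = 0) : A = 0 := by
  rw [tfi_eq'] at h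
  have h2 : ∑ i, ⟪A (stdOrthonormalBasis ℝ V i), A (stdOrthonormalBasis ℝ V i)⟫ = 0 := by
    linarith
  have h3 : ∀ i ∈ Finset.univ,
      ⟪A (stdOrthonormalBasis ℝ V i), A (stdOrthonormalBasis ℝ V i)⟫ = 0 := by
    refine (Finset.sum_eq_zero_iff_of_nonneg fun i _ => real_inner_self_nonneg).mp h2
  refine (stdOrthonormalBasis ℝ V).toBasis.ext fun i => ?_
  have := h3 i (Finset.mem_univ i)
  simpa using inner_self_eq_zero.mp this

lemma wedge_skew (X Y : V) : LinearMap.adjoint (wedgeEnd X Y) = -(wedgeEnd X Y) := by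
  ext v
  refine ext_inner_right ℝ fun w => ?_
  rw [LinearMap.adjoint_inner_left]
  simp [wedgeEnd, inner_sub_left, inner_sub_right, inner_smul_left, inner_smul_right,
    real_inner_comm]
  ring

lemma tfi_wedge (X Y : V) {C : V →ₗ[ℝ] V} (hC : LinearMap.adjoint C = -C) :
    twoFormInner (wedgeEnd X Y) C = ⟪X, C Y⟫ := by
  rw [tfi_eq']
  set b := stdOrthonormalBasis ℝ V
  have key : ∀ i, ⟪(wedgeEnd X Y) (b i), C (b i)⟫
      = ⟪X, b i⟫ * ⟪C Y, b i⟫ - ⟪Y, b i⟫ * ⟪C X, b i⟫ := by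
    intro i
    have h1 : ⟪X, C (b i)⟫ = -⟪C X, b i⟫ := by
      rw [real_inner_comm, skew_inner hC, real_inner_comm]
    have h2 : ⟪Y, C (b i)⟫ = -⟪C Y, b i⟫ := by
      rw [real_inner_comm, skew_inner hC, real_inner_comm]
    simp [wedgeEnd, inner_sub_left, inner_smul_left, h1, h2]
    ring
  rw [Finset.sum_congr rfl fun i _ => key i]
  rw [Finset.sum_sub_distrib, parseval b X (C Y), parseval b Y (C X)]
  have h3 : ⟪Y, C X⟫ = -⟪X, C Y⟫ := by
    rw [real_inner_comm]; exact skew_inner hC X Y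
  rw [h3]; ring


lemma tfi_add_left (A B C : V →ₗ[ℝ] V) :
    twoFormInner (A + B) C = twoFormInner A C + twoFormInner B C := by
  simp [tfi_eq', inner_add_left, Finset.sum_add_distrib, mul_add]

lemma tfi_add_right (A B C : V →ₗ[ℝ] V) :
    twoFormInner A (B + C) = twoFormInner A B + twoFormInner A C := by
  rw [tfi_comm, tfi_add_left, tfi_comm B A, tfi_comm C A]

lemma tfi_smul_right (r : ℝ) (A C : V →ₗ[ℝ] V) :
    twoFormInner A (r • C) = r * twoFormInner A C := by
  rw [tfi_comm, tfi_smul_left, tfi_comm C A]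

end CasAux

/-- In the Casimir setting (curvature operator `R` with square root `Rh`,
image `𝔤 = range R` with orthonormal basis `ω₁,...,ω_k`, Casimir eigenvalue `λ` on `V`),
for every `η ∈ Λ²V` with `R(η) = 0` one has `Σ_α (ad_{R^{1/2}ω_α})² η = 2λ·η`. -/
theorem casimir_eigenvalue_on_kernel
    {V : Type*} [NormedAddCommGroup V] [InnerProductSpace ℝ V] [FiniteDimensional ℝ V]
    (R Rh : (V →ₗ[ℝ] V) →ₗ[ℝ] (V →ₗ[ℝ] V))
    (hRself : ∀ A B : V →ₗ[ℝ] V, twoFormInner (R A) B = twoFormInner A (R B))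
    (hRnonneg : ∀ A : V →ₗ[ℝ] V, 0 ≤ twoFormInner (R A) A)
    (hRskew : ∀ A : V →ₗ[ℝ] V, LinearMap.adjoint (R A) = -(R A))
    (hRsym : ∀ A : V →ₗ[ℝ] V, LinearMap.adjoint A = A → R A = 0)
    (hBianchi : ∀ X Y Z : V,
      R (wedgeEnd X Y) Z + R (wedgeEnd Y Z) X + R (wedgeEnd Z X) Y = 0)
    (hComm : ∀ g ∈ LinearMap.range R, ∀ A : V →ₗ[ℝ] V,
      R (g ∘ₗ A - A ∘ₗ g) = g ∘ₗ R A - R A ∘ₗ g)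
    (hRhsq : ∀ A : V →ₗ[ℝ] V, Rh (Rh A) = R A)
    (hRhself : ∀ A B : V →ₗ[ℝ] V, twoFormInner (Rh A) B = twoFormInner A (Rh B))
    (hRhnonneg : ∀ A : V →ₗ[ℝ] V, 0 ≤ twoFormInner (Rh A) A)
    (hRhskew : ∀ A : V →ₗ[ℝ] V, LinearMap.adjoint (Rh A) = -(Rh A))
    {k : ℕ} (ω : Fin k → (V →ₗ[ℝ] V))
    (hω_mem : ∀ α, ω α ∈ LinearMap.range R)
    (hω_orth : ∀ α β, twoFormInner (ω α) (ω β) = if α = β then 1 else 0)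
    (hω_span : Submodule.span ℝ (Set.range ω) = LinearMap.range R)
    (lam : ℝ)
    (hCas : ∀ v : V, (∑ α, Rh (ω α) (Rh (ω α) v)) = lam • v)
    (η : V →ₗ[ℝ] V) (hηskew : LinearMap.adjoint η = -η) (hηker : R η = 0) :
    (∑ α, (Rh (ω α) ∘ₗ (Rh (ω α) ∘ₗ η - η ∘ₗ Rh (ω α))
        - (Rh (ω α) ∘ₗ η - η ∘ₗ Rh (ω α)) ∘ₗ Rh (ω α)))
      = (2 * lam) • η := by
  classical
  have hskewη : ∀ u v : V, ⟪η u, v⟫ = -⟪u, η v⟫ := fun u v => CasAux.skew_inner hηskew u v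
  have hskewB : ∀ α (u v : V), ⟪Rh (ω α) u, v⟫ = -⟪u, Rh (ω α) v⟫ :=
    fun α => CasAux.skew_inner (hRhskew (ω α))
  -- Rh η = 0
  have hRhη : Rh η = 0 := by
    apply CasAux.tfi_self_eq_zero
    rw [hRhself η (Rh η), hRhsq, hηker, CasAux.tfi_zero_right]
  -- representation of R via the B's
  have hRrep : ∀ A : V →ₗ[ℝ] V, R A = ∑ α, twoFormInner A (Rh (ω α)) • Rh (ω α) := by
    intro A
    set P : V →ₗ[ℝ] V := ∑ α, twoFormInner (Rh A) (ω α) • ω α with hP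
    set Q : V →ₗ[ℝ] V := Rh A - P with hQ
    have hQω : ∀ β, twoFormInner Q (ω β) = 0 := by
      intro β
      rw [hQ, CasAux.tfi_sub_left, hP, CasAux.tfi_sum_left]
      have e : ∀ α, twoFormInner (twoFormInner (Rh A) (ω α) • ω α) (ω β)
          = if α = β then twoFormInner (Rh A) (ω β) else 0 := by
        intro α
        rw [CasAux.tfi_smul_left, hω_orth]
        by_cases h : α = β <;> simp [h]
      rw [Finset.sum_congr rfl fun α _ => e α, Finset.sum_ite_eq' Finset.univ β]
      simp
    have hQrange : ∀ x ∈ LinearMap.range R, twoFormInner Q x = 0 := by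
      intro x hx
      rw [← hω_span] at hx
      induction hx using Submodule.span_induction with
      | mem x hx => obtain ⟨α, rfl⟩ := hx; exact hQω α
      | zero => exact CasAux.tfi_zero_right Q
      | add x y hx hy ihx ihy => rw [CasAux.tfi_add_right, ihx, ihy, add_zero]
      | smul r x hx ih => rw [CasAux.tfi_smul_right, ih, mul_zero]
    have hRQ : R Q = 0 := by
      apply CasAux.tfi_self_eq_zero
      rw [hRself Q (R Q)]
      exact hQrange (R (R Q)) ⟨R Q, rfl⟩
    have hRhQ : Rh Q = 0 := by
      apply CasAux.tfi_self_eq_zero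
      rw [hRhself Q (Rh Q), hRhsq, hRQ, CasAux.tfi_zero_right]
    have hA : Rh A = P + Q := by rw [hQ]; abel
    calc R A = Rh (Rh A) := (hRhsq A).symm
      _ = Rh P + Rh Q := by rw [hA, map_add]
      _ = Rh P := by rw [hRhQ, add_zero]
      _ = ∑ α, twoFormInner (Rh A) (ω α) • Rh (ω α) := by
          rw [hP, map_sum]
          exact Finset.sum_congr rfl fun α _ => by rw [map_smul]
      _ = ∑ α, twoFormInner A (Rh (ω α)) • Rh (ω α) := by
          exact Finset.sum_congr rfl fun α _ => by rw [hRhself A (ω α)]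
  -- curvature formula
  have hRw : ∀ X Y : V, R (wedgeEnd X Y) = ∑ α, ⟪X, Rh (ω α) Y⟫ • Rh (ω α) := by
    intro X Y
    rw [hRrep]
    exact Finset.sum_congr rfl fun α _ => by rw [CasAux.tfi_wedge X Y (hRhskew (ω α))]
  set b := stdOrthonormalBasis ℝ V with hb
  -- the contracted sum S vanishes
  have hS : ∀ X Y : V, ∑ α, ⟪η (Rh (ω α) X), Rh (ω α) Y⟫ = 0 := by
    have anti : ∀ X Y : V, (∑ α, ⟪η (Rh (ω α) X), Rh (ω α) Y⟫)
        = -∑ α, ⟪η (Rh (ω α) Y), Rh (ω α) X⟫ := by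
      intro X Y
      rw [← Finset.sum_neg_distrib]
      refine Finset.sum_congr rfl fun α _ => ?_
      have h := hskewη (Rh (ω α) X) (Rh (ω α) Y)
      have h2 := real_inner_comm (Rh (ω α) X) (η (Rh (ω α) Y))
      linarith
    have term3 : ∀ X Y : V, ∑ i, ⟪(R (wedgeEnd Y X)) (b i), η (b i)⟫ = 0 := by
      intro X Y
      have h1 : twoFormInner η (R (wedgeEnd Y X)) = 0 := by
        rw [CasAux.tfi_comm, hRself (wedgeEnd Y X) η, hηker, CasAux.tfi_zero_right]
      rw [CasAux.tfi_eq b] at h1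
      have h2 : ∑ i, ⟪η (b i), (R (wedgeEnd Y X)) (b i)⟫ = 0 := by linarith
      calc ∑ i, ⟪(R (wedgeEnd Y X)) (b i), η (b i)⟫
          = ∑ i, ⟪η (b i), (R (wedgeEnd Y X)) (b i)⟫ :=
            Finset.sum_congr rfl fun i _ => real_inner_comm _ _
        _ = 0 := h2
    have term1 : ∀ X Y : V, ∑ i, ⟪(R (wedgeEnd X (b i))) Y, η (b i)⟫
        = -∑ α, ⟪η (Rh (ω α) X), Rh (ω α) Y⟫ := by
      intro X Y
      have e1 : ∀ i, ⟪(R (wedgeEnd X (b i))) Y, η (b i)⟫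
          = ∑ α, ⟪Rh (ω α) X, b i⟫ * ⟪η (Rh (ω α) Y), b i⟫ := by
        intro i
        rw [hRw, LinearMap.sum_apply, sum_inner]
        refine Finset.sum_congr rfl fun α _ => ?_
        rw [LinearMap.smul_apply, real_inner_smul_left]
        have a1 : ⟪X, Rh (ω α) (b i)⟫ = -⟪Rh (ω α) X, b i⟫ := by
          have := hskewB α X (b i); linarith
        have a2 : ⟪Rh (ω α) Y, η (b i)⟫ = -⟪η (Rh (ω α) Y), b i⟫ := by
          have h := hskewη (Rh (ω α) Y) (b i)
          have h2 := real_inner_comm (Rh (ω α) Y) (η (b i))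
          have h3 := real_inner_comm (η (Rh (ω α) Y)) (b i)
          linarith
        rw [a1, a2]; ring
      rw [Finset.sum_congr rfl fun i _ => e1 i, Finset.sum_comm, ← Finset.sum_neg_distrib]
      refine Finset.sum_congr rfl fun α _ => ?_
      rw [CasAux.parseval b (Rh (ω α) X) (η (Rh (ω α) Y))]
      have h := hskewη (Rh (ω α) X) (Rh (ω α) Y)
      have h2 := real_inner_comm (Rh (ω α) X) (η (Rh (ω α) Y))
      linarith
    have term2 : ∀ X Y : V, ∑ i, ⟪(R (wedgeEnd (b i) Y)) X, η (b i)⟫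
        = ∑ α, ⟪η (Rh (ω α) Y), Rh (ω α) X⟫ := by
      intro X Y
      have e1 : ∀ i, ⟪(R (wedgeEnd (b i) Y)) X, η (b i)⟫
          = ∑ α, ⟪Rh (ω α) Y, b i⟫ * (-⟪η (Rh (ω α) X), b i⟫) := by
        intro i
        rw [hRw, LinearMap.sum_apply, sum_inner]
        refine Finset.sum_congr rfl fun α _ => ?_
        rw [LinearMap.smul_apply, real_inner_smul_left]
        have a1 : ⟪b i, Rh (ω α) Y⟫ = ⟪Rh (ω α) Y, b i⟫ := real_inner_comm _ _
        have a2 : ⟪Rh (ω α) X, η (b i)⟫ = -⟪η (Rh (ω α) X), b i⟫ := by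
          have h := hskewη (Rh (ω α) X) (b i)
          have h2 := real_inner_comm (Rh (ω α) X) (η (b i))
          have h3 := real_inner_comm (η (Rh (ω α) X)) (b i)
          linarith
        rw [a1, a2]
      rw [Finset.sum_congr rfl fun i _ => e1 i, Finset.sum_comm]
      refine Finset.sum_congr rfl fun α _ => ?_
      have hp : ∑ i, ⟪Rh (ω α) Y, b i⟫ * ⟪η (Rh (ω α) X), b i⟫
          = ⟪Rh (ω α) Y, η (Rh (ω α) X)⟫ := CasAux.parseval b _ _
      have h := hskewη (Rh (ω α) Y) (Rh (ω α) X)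
      have h2 := real_inner_comm (Rh (ω α) Y) (η (Rh (ω α) X))
      have : ∑ i, ⟪Rh (ω α) Y, b i⟫ * (-⟪η (Rh (ω α) X), b i⟫)
          = -∑ i, ⟪Rh (ω α) Y, b i⟫ * ⟪η (Rh (ω α) X), b i⟫ := by
        rw [← Finset.sum_neg_distrib]
        exact Finset.sum_congr rfl fun i _ => by ring
      rw [this, hp]
      linarith
    intro X Y
    have hsum0 : (∑ i, ⟪(R (wedgeEnd X (b i))) Y, η (b i)⟫)
        + (∑ i, ⟪(R (wedgeEnd (b i) Y)) X, η (b i)⟫)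
        + (∑ i, ⟪(R (wedgeEnd Y X)) (b i), η (b i)⟫) = 0 := by
      rw [← Finset.sum_add_distrib, ← Finset.sum_add_distrib]
      refine Finset.sum_eq_zero fun i _ => ?_
      have h := hBianchi X (b i) Y
      have h0 : ⟪R (wedgeEnd X (b i)) Y + R (wedgeEnd (b i) Y) X + R (wedgeEnd Y X) (b i),
          η (b i)⟫ = (0:ℝ) := by rw [h, inner_zero_left]
      simpa [inner_add_left] using h0
    rw [term1 X Y, term2 X Y, term3 X Y] at hsum0
    have ha := anti X Y
    linarith
  -- the mixed operator vanishes
  have hTop : ∀ v : V, (∑ α, Rh (ω α) (η (Rh (ω α) v))) = 0 := by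
    intro v
    have hw : ∀ w : V, ⟪∑ α, Rh (ω α) (η (Rh (ω α) v)), w⟫ = 0 := by
      intro w
      rw [sum_inner]
      have e : ∀ α, ⟪Rh (ω α) (η (Rh (ω α) v)), w⟫ = -⟪η (Rh (ω α) v), Rh (ω α) w⟫ :=
        fun α => hskewB α _ w
      rw [Finset.sum_congr rfl fun α _ => e α, Finset.sum_neg_distrib,
        hS v w, neg_zero]
    exact inner_self_eq_zero.mp (hw _)
  -- final algebra
  ext v
  simp only [LinearMap.sum_apply, LinearMap.sub_apply, LinearMap.comp_apply, map_sub,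
    LinearMap.smul_apply]
  have expand : ∀ α, Rh (ω α) (Rh (ω α) (η v)) - Rh (ω α) (η (Rh (ω α) v))
        - (Rh (ω α) (η (Rh (ω α) v)) - η (Rh (ω α) (Rh (ω α) v)))
      = Rh (ω α) (Rh (ω α) (η v)) + η (Rh (ω α) (Rh (ω α) v))
        - (Rh (ω α) (η (Rh (ω α) v)) + Rh (ω α) (η (Rh (ω α) v))) := by
    intro α; abel
  rw [Finset.sum_congr rfl fun α _ => expand α, Finset.sum_sub_distrib,
    Finset.sum_add_distrib, Finset.sum_add_distrib]
  rw [hCas (η v), hTop v, add_zero, sub_zero]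
  have h2 : (∑ α, η (Rh (ω α) (Rh (ω α) v))) = lam • η v := by
    rw [← map_sum, hCas v, map_smul]
  rw [h2, two_mul, add_smul]
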